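/- Let M, N ⊆ ℝ³ be compact sets, let μ be the 2-dimensional Hausdorff measure restricted to M and ν the 2-dimensional Hausdorff measure restricted to N, and assume μ(M) = 1 = ν(N) and that every nonempty relatively open subset of M has positive μ-measure and every nonempty relatively open subset of N has positive ν-measure. Suppose that for every n ≥ 1 there exist a continuous bijection Cₙ : M → N with pushforward of μ under Cₙ equal to ν, and an affine isometry Rₙ of ℝ³, such that ∫_M ‖Rₙ x − Cₙ x‖² dμ(x) < 1/n. Then M and N are congruent: there exists an affine isometry R of ℝ³ with R(M) = N. -/

import Mathlib

open MeasureTheory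

noncomputable section

local notation "E3" => EuclideanSpace ℝ (Fin 3)

open Filter Metric Bornology

private lemma clm_apply_tendsto {L : ℕ → E3 →L[ℝ] E3} {L' : E3 →L[ℝ] E3}
    (hL : Tendsto L atTop (nhds L')) (v : E3) :
    Tendsto (fun k => L k v) atTop (nhds (L' v)) := by
  rw [tendsto_iff_norm_sub_tendsto_zero] at hL ⊢
  apply squeeze_zero (fun k => norm_nonneg _) (g := fun k => ‖L k - L'‖ * ‖v‖)
  · intro k
    calc ‖L k v - L' v‖ = ‖(L k - L') v‖ := by simp
      _ ≤ ‖L k - L'‖ * ‖v‖ := (L k - L').le_opNorm v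
  · simpa using hL.mul_const ‖v‖

set_option maxHeartbeats 2000000 in
/-- Let `M, N ⊆ ℝ³` be compact with unit 2-dimensional Hausdorff measure, and
suppose every nonempty relatively open subset of `M` (resp. `N`) has positive measure. If for
every `n ≥ 1` there are a continuous measure-preserving bijection `Cₙ : M → N` and an affine
isometry `Rₙ` with `∫_M ‖Rₙ x − Cₙ x‖² dμ < 1/n`, then `M` and `N` are congruent. -/

theorem continuous_procrustes_zero_implies_congruent
    (M N : Set E3) (hM : IsCompact M) (hN : IsCompact N)
    (hμ1 : μH[2] M = 1) (hν1 : μH[2] N = 1)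
    (hMopen : ∀ U : Set E3, IsOpen U → (U ∩ M).Nonempty → 0 < μH[2] (U ∩ M))
    (hNopen : ∀ U : Set E3, IsOpen U → (U ∩ N).Nonempty → 0 < μH[2] (U ∩ N))
    (h : ∀ n : ℕ, 1 ≤ n → ∃ (C : E3 → E3) (R : E3 ≃ᵃⁱ[ℝ] E3),
      ContinuousOn C M ∧ Set.BijOn C M N ∧
      Measure.map C (Measure.restrict μH[2] M) = Measure.restrict μH[2] N ∧
      ∫ x in M, ‖R x - C x‖ ^ 2 ∂(μH[2]) < 1 / (n : ℝ)) :
    ∃ R : E3 ≃ᵃⁱ[ℝ] E3, ⇑R '' M = N := by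
  classical
  have hMne : M.Nonempty := by
    rcases Set.eq_empty_or_nonempty M with hme | hne
    · rw [hme] at hμ1; simp at hμ1
    · exact hne
  have hNne : N.Nonempty := by
    rcases Set.eq_empty_or_nonempty N with hme | hne
    · rw [hme] at hν1; simp at hν1
    · exact hne
  have hMmeas : MeasurableSet M := hM.measurableSet
  have hNmeas : MeasurableSet N := hN.measurableSet
  -- choose the data, re-indexed so that index n corresponds to `h (n+1)`
  choose C R hC hbij hmap hint using fun n : ℕ => h (n + 1) (Nat.le_add_left 1 n)
  -- 1/(n+1) → 0
  have htends : Tendsto (fun n : ℕ => 1 / ((n : ℝ) + 1)) atTop (nhds 0) :=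
    tendsto_one_div_add_atTop_nhds_zero_nat
  -- integrability
  haveI hfin : IsFiniteMeasure (Measure.restrict μH[2] M) := by
    constructor
    rw [Measure.restrict_apply_univ, hμ1]
    exact ENNReal.one_lt_top
  have hInt : ∀ n, IntegrableOn (fun x => ‖R n x - C n x‖ ^ 2) M μH[2] := by
    intro n
    have hcont : ContinuousOn (fun x => ‖R n x - C n x‖ ^ 2) M := by
      apply ContinuousOn.pow
      exact (((R n).continuous.continuousOn.sub (hC n)).norm)
    obtain ⟨b, hb⟩ := hM.exists_bound_of_continuousOn hcont
    refine Integrable.mono' (integrable_const b) (hcont.aestronglyMeasurable hMmeas) ?_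
    exact (ae_restrict_iff' hMmeas).2 (Filter.Eventually.of_forall hb)
  have hfnonneg : ∀ n, (0 : E3 → ℝ) ≤ᵐ[μH[2].restrict M] fun x => ‖R n x - C n x‖ ^ 2 :=
    fun n => Filter.Eventually.of_forall fun x => by positivity
  -- CLAIM 1
  have claim1 : ∀ ε : ℝ, 0 < ε →
      ∀ᶠ n in atTop, ∀ x ∈ M, infDist (R n x) N < ε := by
    intro ε hε
    obtain ⟨t, htM, htfin, hcov⟩ := hM.finite_cover_balls (show 0 < ε / 4 by linarith)
    set δ : ℝ := sInf ((fun z => (μH[2] (ball z (ε / 4) ∩ M)).toReal) '' t) with hδdef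
    have hposelt : ∀ z ∈ t, 0 < (μH[2] (ball z (ε / 4) ∩ M)).toReal := by
      intro z hz
      have hzM : z ∈ M := htM hz
      have hne : (ball z (ε / 4) ∩ M).Nonempty :=
        ⟨z, mem_ball_self (by linarith), hzM⟩
      have hpos := hMopen _ isOpen_ball hne
      have hftop : μH[2] (ball z (ε / 4) ∩ M) ≠ ⊤ :=
        ne_top_of_le_ne_top (by rw [hμ1]; exact ENNReal.one_ne_top)
          (measure_mono Set.inter_subset_right)
      exact ENNReal.toReal_pos hpos.ne' hftop
    have htne : t.Nonempty := by
      obtain ⟨x0, hx0⟩ := hMne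
      obtain ⟨z, hz, _⟩ := Set.mem_iUnion₂.1 (hcov hx0)
      exact ⟨z, hz⟩
    have himgfin : ((fun z => (μH[2] (ball z (ε / 4) ∩ M)).toReal) '' t).Finite :=
      htfin.image _
    have hδpos : 0 < δ := by
      obtain ⟨w, hw, hweq⟩ := (htne.image _).csInf_mem himgfin
      rw [hδdef, ← hweq]
      exact hposelt w hw
    have hδle : ∀ z ∈ t, δ ≤ (μH[2] (ball z (ε / 4) ∩ M)).toReal := by
      intro z hz
      exact csInf_le himgfin.bddBelow (Set.mem_image_of_mem _ hz)
    have hev : ∀ᶠ n : ℕ in atTop, 1 / ((n : ℝ) + 1) < (ε / 2) ^ 2 * δ :=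
      htends.eventually_lt_const (by positivity)
    filter_upwards [hev] with n hn x hx
    by_contra hcon
    push_neg at hcon
    obtain ⟨z, hz, hxz⟩ := Set.mem_iUnion₂.1 (hcov hx)
    set S : Set E3 := ball z (ε / 4) ∩ M with hSdef
    have hSsub : S ⊆ M := Set.inter_subset_right
    have hSmeas : MeasurableSet S := measurableSet_ball.inter hMmeas
    have hSfin : μH[2] S ≠ ⊤ := by
      refine ne_top_of_le_ne_top (by rw [hμ1]; exact ENNReal.one_ne_top) (measure_mono hSsub)
    have hlow : ∀ y ∈ S, (ε / 2) ^ 2 ≤ ‖R n y - C n y‖ ^ 2 := by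
      intro y hy
      have hyM : y ∈ M := hy.2
      have hd1 : dist (R n y) (R n x) < ε / 2 := by
        rw [(R n).dist_map]
        calc dist y x ≤ dist y z + dist z x := dist_triangle _ _ _
          _ < ε / 4 + ε / 4 := by
              have h1 : dist y z < ε / 4 := mem_ball.1 hy.1
              have h2 : dist z x < ε / 4 := by
                rw [dist_comm]; exact mem_ball.1 hxz
              linarith
          _ = ε / 2 := by ring
      have hCN : C n y ∈ N := (hbij n).mapsTo hyM
      have h3 : ε ≤ dist (R n x) (C n y) := le_trans hcon (infDist_le_dist_of_mem hCN)
      have h4 : ε / 2 ≤ dist (R n y) (C n y) := by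
        have := dist_triangle (R n x) (R n y) (C n y)
        rw [dist_comm (R n x) (R n y)] at this
        linarith
      have h5 : ε / 2 ≤ ‖R n y - C n y‖ := by rwa [← dist_eq_norm]
      have := sq_le_sq' (by linarith [norm_nonneg (R n y - C n y)]) h5
      calc (ε / 2) ^ 2 ≤ (ε/2) ^ 2 := le_refl _
        _ ≤ ‖R n y - C n y‖ ^ 2 := by nlinarith [norm_nonneg (R n y - C n y)]
    have hkey : (ε / 2) ^ 2 * (μH[2] S).toReal ≤ ∫ y in M, ‖R n y - C n y‖ ^ 2 ∂(μH[2]) := by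
      refine le_trans (setIntegral_ge_of_const_le_real hSmeas hSfin hlow ((hInt n).mono_set hSsub)) ?_
      exact setIntegral_mono_set (hInt n) (hfnonneg n) (Filter.Eventually.of_forall hSsub)
    have hδS : δ ≤ (μH[2] S).toReal := hδle z hz
    have : (ε / 2) ^ 2 * δ ≤ ∫ y in M, ‖R n y - C n y‖ ^ 2 ∂(μH[2]) := by
      refine le_trans ?_ hkey
      exact mul_le_mul_of_nonneg_left hδS (by positivity)
    have hi := hint n
    push_cast at hi
    linarith
  -- CLAIM 2
  have claim2 : ∀ ε : ℝ, 0 < ε →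
      ∀ᶠ n in atTop, ∀ y ∈ N, ∃ x ∈ M, dist y (R n x) < ε := by
    intro ε hε
    obtain ⟨t, htN, htfin, hcov⟩ := hN.finite_cover_balls (show 0 < ε / 4 by linarith)
    set δ : ℝ := sInf ((fun z => (μH[2] (ball z (ε / 4) ∩ N)).toReal) '' t) with hδdef
    have hposelt : ∀ z ∈ t, 0 < (μH[2] (ball z (ε / 4) ∩ N)).toReal := by
      intro z hz
      have hzN : z ∈ N := htN hz
      have hne : (ball z (ε / 4) ∩ N).Nonempty :=
        ⟨z, mem_ball_self (by linarith), hzN⟩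
      have hpos := hNopen _ isOpen_ball hne
      have hftop : μH[2] (ball z (ε / 4) ∩ N) ≠ ⊤ :=
        ne_top_of_le_ne_top (by rw [hν1]; exact ENNReal.one_ne_top)
          (measure_mono Set.inter_subset_right)
      exact ENNReal.toReal_pos hpos.ne' hftop
    have htne : t.Nonempty := by
      obtain ⟨y0, hy0⟩ := hNne
      obtain ⟨z, hz, _⟩ := Set.mem_iUnion₂.1 (hcov hy0)
      exact ⟨z, hz⟩
    have himgfin : ((fun z => (μH[2] (ball z (ε / 4) ∩ N)).toReal) '' t).Finite :=
      htfin.image _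
    have hδpos : 0 < δ := by
      obtain ⟨w, hw, hweq⟩ := (htne.image _).csInf_mem himgfin
      rw [hδdef, ← hweq]
      exact hposelt w hw
    have hδle : ∀ z ∈ t, δ ≤ (μH[2] (ball z (ε / 4) ∩ N)).toReal := by
      intro z hz
      exact csInf_le himgfin.bddBelow (Set.mem_image_of_mem _ hz)
    have hev : ∀ᶠ n : ℕ in atTop, 1 / ((n : ℝ) + 1) < (ε / 2) ^ 2 * δ :=
      htends.eventually_lt_const (by positivity)
    filter_upwards [hev] with n hn
    by_contra hcon
    push_neg at hcon
    obtain ⟨y, hy, hyfar⟩ := hcon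
    obtain ⟨z, hz, hyz⟩ := Set.mem_iUnion₂.1 (hcov hy)
    -- the preimage of the ball under C n, intersected with M
    set S : Set E3 := C n ⁻¹' ball z (ε / 4) ∩ M with hSdef
    obtain ⟨U, hUopen, hUeq⟩ := (_root_.continuousOn_iff'.1 (hC n)) (ball z (ε / 4)) isOpen_ball
    have hSmeas : MeasurableSet S := by
      rw [hSdef, hUeq]
      exact hUopen.measurableSet.inter hMmeas
    have hSsub : S ⊆ M := Set.inter_subset_right
    have hSfin : μH[2] S ≠ ⊤ :=
      ne_top_of_le_ne_top (by rw [hμ1]; exact ENNReal.one_ne_top) (measure_mono hSsub)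
    -- measure of S equals measure of the ball piece of N
    have hSμ : μH[2] S = μH[2] (ball z (ε / 4) ∩ N) := by
      have h1 : μH[2] S = (μH[2].restrict M) (C n ⁻¹' ball z (ε / 4)) := by
        rw [Measure.restrict_apply' hMmeas, hSdef]
      have h2 : (μH[2].restrict M) (C n ⁻¹' ball z (ε / 4))
          = (Measure.map (C n) (μH[2].restrict M)) (ball z (ε / 4)) := by
        rw [Measure.map_apply_of_aemeasurable
          ((hC n).aemeasurable hMmeas) measurableSet_ball]
      rw [h1, h2, hmap n, Measure.restrict_apply' hNmeas]
    have hlow : ∀ x ∈ S, (ε / 2) ^ 2 ≤ ‖R n x - C n x‖ ^ 2 := by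
      intro x hxS
      have hxM : x ∈ M := hxS.2
      have hCball : C n x ∈ ball z (ε / 4) := hxS.1
      have hd1 : dist (C n x) y < ε / 2 := by
        calc dist (C n x) y ≤ dist (C n x) z + dist z y := dist_triangle _ _ _
          _ < ε / 4 + ε / 4 := by
              have h1 : dist (C n x) z < ε / 4 := mem_ball.1 hCball
              have h2 : dist z y < ε / 4 := by rw [dist_comm]; exact mem_ball.1 hyz
              linarith
          _ = ε / 2 := by ring
      have h3 : ε ≤ dist y (R n x) := hyfar x hxM
      have h4 : ε / 2 ≤ dist (R n x) (C n x) := by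
        have := dist_triangle y (C n x) (R n x)
        rw [dist_comm (C n x) (R n x)] at this
        rw [dist_comm (C n x) y] at hd1
        linarith
      have h5 : ε / 2 ≤ ‖R n x - C n x‖ := by rwa [← dist_eq_norm]
      nlinarith [norm_nonneg (R n x - C n x)]
    have hkey : (ε / 2) ^ 2 * (μH[2] S).toReal ≤ ∫ x in M, ‖R n x - C n x‖ ^ 2 ∂(μH[2]) := by
      refine le_trans (setIntegral_ge_of_const_le_real hSmeas hSfin hlow ((hInt n).mono_set hSsub)) ?_
      exact setIntegral_mono_set (hInt n) (hfnonneg n) (Filter.Eventually.of_forall hSsub)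
    have hδS : δ ≤ (μH[2] S).toReal := by
      rw [hSμ]; exact hδle z hz
    have : (ε / 2) ^ 2 * δ ≤ ∫ x in M, ‖R n x - C n x‖ ^ 2 ∂(μH[2]) := by
      refine le_trans ?_ hkey
      exact mul_le_mul_of_nonneg_left hδS (by positivity)
    have hi := hint n
    push_cast at hi
    linarith
  -- Step B: extract a convergent subsequence of the isometries
  obtain ⟨n₁, hn₁⟩ := eventually_atTop.1 (claim1 1 one_pos)
  obtain ⟨x₀, hx₀⟩ := hMne
  obtain ⟨rN, hrN⟩ := hN.isBounded.subset_closedBall 0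
  obtain ⟨rM', hrM'⟩ := hM.isBounded.subset_closedBall 0
  set rM : ℝ := max rM' 0 with hrMdef
  have hrMbd : ∀ x ∈ M, ‖x‖ ≤ rM := by
    intro x hx
    have := hrM' hx
    rw [mem_closedBall, dist_zero_right] at this
    exact le_trans this (le_max_left _ _)
  set L : ℕ → E3 →L[ℝ] E3 := fun k =>
    ((R (k + n₁)).linearIsometryEquiv.toLinearIsometry).toContinuousLinearMap with hLdef
  set b : ℕ → E3 := fun k => R (k + n₁) 0 with hbdef
  have hdecomp : ∀ k x, R (k + n₁) x = L k x + b k := by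
    intro k x
    have h0 := (R (k + n₁)).map_vadd (0 : E3) x
    simp only [vadd_eq_add, add_zero] at h0
    simpa [hLdef, hbdef] using h0
  have hLnorm : ∀ k v, ‖L k v‖ = ‖v‖ := by
    intro k v
    simp [hLdef]
  have hbbd : ∀ k, ‖b k‖ ≤ ‖x₀‖ + rN + 1 := by
    intro k
    have hclose := hn₁ (k + n₁) (Nat.le_add_left n₁ k) x₀ hx₀
    obtain ⟨y, hyN, hy⟩ := (infDist_lt_iff hNne).1 hclose
    have hd0 : dist (R (k + n₁) 0) (R (k + n₁) x₀) = ‖x₀‖ := by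
      rw [(R (k + n₁)).dist_map, dist_comm, dist_zero_right]
    have hyb : ‖y‖ ≤ rN := by
      have := hrN hyN
      rwa [mem_closedBall, dist_zero_right] at this
    calc ‖b k‖ = dist (R (k + n₁) 0) 0 := by rw [dist_zero_right]
      _ ≤ dist (R (k + n₁) 0) (R (k + n₁) x₀) + dist (R (k + n₁) x₀) y + dist y 0 :=
          dist_triangle4 _ _ _ _
      _ ≤ ‖x₀‖ + 1 + rN := by
          rw [hd0, dist_zero_right]
          have := le_of_lt hy
          linarith
      _ = ‖x₀‖ + rN + 1 := by ring
  have hK : IsCompact ((closedBall (0 : E3 →L[ℝ] E3) 1) ×ˢ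
      (closedBall (0 : E3) (‖x₀‖ + rN + 1))) :=
    (isCompact_closedBall _ _).prod (isCompact_closedBall _ _)
  have hmemK : ∀ k, (L k, b k) ∈ (closedBall (0 : E3 →L[ℝ] E3) 1) ×ˢ
      (closedBall (0 : E3) (‖x₀‖ + rN + 1)) := by
    intro k
    constructor
    · rw [mem_closedBall, dist_zero_right]
      exact (L k).opNorm_le_bound zero_le_one fun v => by rw [hLnorm k v, one_mul]
    · rw [mem_closedBall, dist_zero_right]
      exact hbbd k
  obtain ⟨⟨Linf, binf⟩, _, φ, hφ, hconv⟩ := hK.tendsto_subseq hmemK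
  have hLconv : Tendsto (fun k => L (φ k)) atTop (nhds Linf) :=
    (continuous_fst.tendsto _).comp hconv
  have hbconv : Tendsto (fun k => b (φ k)) atTop (nhds binf) :=
    (continuous_snd.tendsto _).comp hconv
  have hLinfnorm : ∀ v, ‖Linf v‖ = ‖v‖ := by
    intro v
    have h1 : Tendsto (fun k => ‖L (φ k) v‖) atTop (nhds ‖Linf v‖) :=
      (clm_apply_tendsto hLconv v).norm
    have h2 : (fun k => ‖L (φ k) v‖) = fun _ => ‖v‖ := funext fun k => hLnorm (φ k) v
    rw [h2] at h1
    exact tendsto_nhds_unique h1 tendsto_const_nhds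
  set li : E3 →ₗᵢ[ℝ] E3 := ⟨(Linf : E3 →ₗ[ℝ] E3), hLinfnorm⟩ with hlidef
  set Leq : E3 ≃ₗᵢ[ℝ] E3 := li.toLinearIsometryEquiv rfl with hLeqdef
  set Rfin : E3 ≃ᵃⁱ[ℝ] E3 :=
    Leq.toAffineIsometryEquiv.trans (AffineIsometryEquiv.constVAdd ℝ E3 binf) with hRfindef
  set F : E3 → E3 := fun x => Linf x + binf with hFdef
  have hRF : ⇑Rfin = F := by
    funext x
    show (AffineIsometryEquiv.constVAdd ℝ E3 binf) (Leq.toAffineIsometryEquiv x) = Linf x + binf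
    have h1 : Leq.toAffineIsometryEquiv x = Linf x := by
      rw [LinearIsometryEquiv.coe_toAffineIsometryEquiv, hLeqdef,
        LinearIsometry.coe_toLinearIsometryEquiv]
      rfl
    rw [h1]
    show binf +ᵥ Linf x = Linf x + binf
    rw [vadd_eq_add, add_comm]
  -- uniform convergence on M
  have hunif : ∀ ε : ℝ, 0 < ε →
      ∀ᶠ k in atTop, ∀ x ∈ M, dist (R (φ k + n₁) x) (F x) < ε := by
    intro ε hε
    have h1 : Tendsto (fun k => ‖L (φ k) - Linf‖) atTop (nhds 0) :=
      tendsto_iff_norm_sub_tendsto_zero.1 hLconv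
    have h2 : Tendsto (fun k => ‖b (φ k) - binf‖) atTop (nhds 0) :=
      tendsto_iff_norm_sub_tendsto_zero.1 hbconv
    have h0 : Tendsto (fun k => ‖L (φ k) - Linf‖ * rM + ‖b (φ k) - binf‖) atTop (nhds 0) := by
      simpa using (h1.mul_const rM).add h2
    filter_upwards [h0.eventually_lt_const hε] with k hk x hx
    rw [hdecomp (φ k) x, dist_eq_norm]
    have hre : L (φ k) x + b (φ k) - F x = (L (φ k) x - Linf x) + (b (φ k) - binf) := by
      rw [hFdef]; module
    calc ‖L (φ k) x + b (φ k) - F x‖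
        ≤ ‖L (φ k) x - Linf x‖ + ‖b (φ k) - binf‖ := by rw [hre]; exact norm_add_le _ _
      _ ≤ ‖L (φ k) - Linf‖ * rM + ‖b (φ k) - binf‖ := by
          have h3 : ‖L (φ k) x - Linf x‖ ≤ ‖L (φ k) - Linf‖ * rM := by
            calc ‖L (φ k) x - Linf x‖ = ‖(L (φ k) - Linf) x‖ := by simp
              _ ≤ ‖L (φ k) - Linf‖ * ‖x‖ := (L (φ k) - Linf).le_opNorm x
              _ ≤ ‖L (φ k) - Linf‖ * rM :=
                  mul_le_mul_of_nonneg_left (hrMbd x hx) (norm_nonneg _)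
          linarith
      _ < ε := hk
  have hψ : Tendsto (fun k => φ k + n₁) atTop atTop :=
    tendsto_atTop_mono (fun k => Nat.le_add_right (φ k) n₁) hφ.tendsto_atTop
  refine ⟨Rfin, ?_⟩
  rw [hRF]
  have hFcont : Continuous F := Linf.continuous.add continuous_const
  apply Set.Subset.antisymm
  · rintro _ ⟨x, hx, rfl⟩
    rw [hN.isClosed.mem_iff_infDist_zero hNne]
    by_contra hne0
    have hpos : 0 < infDist (F x) N := lt_of_le_of_ne infDist_nonneg (Ne.symm hne0)
    have h1 : ∀ᶠ k in atTop, ∀ x' ∈ M, infDist (R (φ k + n₁) x') N < infDist (F x) N / 2 :=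
      hψ.eventually (claim1 _ (by linarith))
    obtain ⟨k, hk1, hk2⟩ := (h1.and (hunif _ (show (0:ℝ) < infDist (F x) N / 2 by linarith))).exists
    have h3 : infDist (F x) N ≤ infDist (R (φ k + n₁) x) N + dist (F x) (R (φ k + n₁) x) :=
      infDist_le_infDist_add_dist
    have h4 : dist (F x) (R (φ k + n₁) x) < infDist (F x) N / 2 := by
      rw [dist_comm]; exact hk2 x hx
    have h5 := hk1 x hx
    linarith
  · intro y hy
    by_contra hyF
    have hFMcomp : IsCompact (F '' M) := hM.image hFcont
    have hFMne : (F '' M).Nonempty := ⟨F x₀, Set.mem_image_of_mem F hx₀⟩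
    have hpos : 0 < infDist y (F '' M) :=
      (hFMcomp.isClosed.notMem_iff_infDist_pos hFMne).1 hyF
    have h1 : ∀ᶠ k in atTop, ∀ y' ∈ N, ∃ x ∈ M,
        dist y' (R (φ k + n₁) x) < infDist y (F '' M) / 2 :=
      hψ.eventually (claim2 _ (by linarith))
    obtain ⟨k, hk1, hk2⟩ :=
      (h1.and (hunif _ (show (0:ℝ) < infDist y (F '' M) / 2 by linarith))).exists
    obtain ⟨x, hx, hdx⟩ := hk1 y hy
    have h2 : dist y (F x) < infDist y (F '' M) := by
      calc dist y (F x) ≤ dist y (R (φ k + n₁) x) + dist (R (φ k + n₁) x) (F x) :=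
            dist_triangle _ _ _
        _ < infDist y (F '' M) / 2 + infDist y (F '' M) / 2 :=
            add_lt_add hdx (hk2 x hx)
        _ = infDist y (F '' M) := by ring
    have h3 : infDist y (F '' M) ≤ dist y (F x) :=
      infDist_le_dist_of_mem (Set.mem_image_of_mem F hx)
    linarith
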